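/- If A ∈ T_{m,n} is a circulant tensor, then the following are equivalent: (a) A is a B-tensor; (b) A is a double B-tensor; (c) a_{1...1} − γ_1^+(A) > Σ_{(i_2,...,i_m)≠(1,...,1)} (γ_1^+(A) − a_{1 i_2...i_m}). -/

import Mathlib

set_option linter.unusedSectionVars false


open Finset

namespace TensorB

abbrev Tensor (n m : ℕ) := Fin n → (Fin (m-1) → Fin n) → ℝ

/-- The diagonal index tuple `(i,...,i)`. -/
def diag {n m : ℕ} (i : Fin n) : Fin (m-1) → Fin n := fun _ => i

/-- Sum of the `i`-th row of `A`. -/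
def rowSum {n m : ℕ} (A : Tensor n m) (i : Fin n) : ℝ :=
  ∑ j : Fin (m-1) → Fin n, A i j

/-- Off-diagonal index tuples of row `i`. -/
def offIdx (n m : ℕ) (i : Fin n) : Finset (Fin (m-1) → Fin n) :=
  Finset.univ.filter (fun j => j ≠ diag i)

/-- `γ_i^+(A) = max {0, off-diagonal entries of row i}`. -/
def gammaPlus {n m : ℕ} (A : Tensor n m) (i : Fin n) : ℝ :=
  (offIdx n m i).fold max 0 (A i)

/-- B-tensor. -/
def IsBTensor {n m : ℕ} (A : Tensor n m) : Prop :=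
  ∀ i : Fin n, 0 < rowSum A i ∧
    ∀ j, j ≠ diag i → A i j < (1 / (n : ℝ) ^ (m - 1)) * rowSum A i

/-- The deficiency sum `Σ_{(i_2,...,i_m)≠(i,...,i)} (γ_i^+(A) − a_{i i_2...i_m})`. -/
def defSum {n m : ℕ} (A : Tensor n m) (i : Fin n) : ℝ :=
  ∑ j ∈ offIdx n m i, (gammaPlus A i - A i j)

/-- Double B-tensor. -/
def IsDoubleBTensor {n m : ℕ} (A : Tensor n m) : Prop :=
  ∀ i : Fin n,
    gammaPlus A i < A i (diag i) ∧
    defSum A i ≤ A i (diag i) - gammaPlus A i ∧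
    ∀ j, j ≠ i →
      defSum A i * defSum A j <
        (A i (diag i) - gammaPlus A i) * (A j (diag j) - gammaPlus A j)

/-- Z-tensor: all off-diagonal entries nonpositive. -/
def IsZTensor {n m : ℕ} (A : Tensor n m) : Prop :=
  ∀ i : Fin n, ∀ j, j ≠ diag i → A i j ≤ 0

/-- Strictly diagonally dominant tensor. -/
def IsSDD {n m : ℕ} (A : Tensor n m) : Prop :=
  ∀ i : Fin n, ∑ j ∈ offIdx n m i, |A i j| < A i (diag i)

/-- Circulant tensor. -/
def IsCirculant {n m : ℕ} [NeZero n] (A : Tensor n m) : Prop :=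
  ∀ (i : Fin n) (j : Fin (m-1) → Fin n), A i j = A (i + 1) (fun l => j l + 1)

/-- Membership in the interval tensor `[L, U]`. -/
def Mem {n m : ℕ} (L U A : Tensor n m) : Prop :=
  ∀ i j, L i j ≤ A i j ∧ A i j ≤ U i j

/-- Entrywise `L ≤ U`, so that `[L,U]` is a genuine interval tensor. -/
def IntervalValid {n m : ℕ} (L U : Tensor n m) : Prop :=
  ∀ i j, L i j ≤ U i j

section Aux
variable {n m : ℕ} [NeZero n]
open Fin.NatCast Fin.CommRing

lemma shift_aux (A : Tensor n m) (hC : IsCirculant A) (k : ℕ) (i : Fin n)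
    (j : Fin (m-1) → Fin n) :
    A i j = A (i + (k : Fin n)) (fun l => j l + (k : Fin n)) := by
  induction k with
  | zero => simp
  | succ k ih =>
      rw [ih, hC]
      congr 1
      · push_cast; ring
      · funext l; push_cast; ring

lemma row_eq (A : Tensor n m) (hC : IsCirculant A) (i : Fin n) (j : Fin (m-1) → Fin n) :
    A i j = A 0 (fun l => j l - i) := by
  have h := shift_aux A hC i.val 0 (fun l => j l - i)
  simp only [Fin.cast_val_eq_self, zero_add, sub_add_cancel] at h
  exact h.symm

lemma phi_inj (i : Fin n) :
    Function.Injective (fun (j : Fin (m-1) → Fin n) => fun l => j l + i) := by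
  intro a b h
  funext l
  have := congrFun h l
  exact add_right_cancel this

lemma offIdx_eq (i : Fin n) :
    offIdx n m i = (offIdx n m 0).image (fun j => fun l => j l + i) := by
  ext j
  simp only [offIdx, mem_filter, mem_univ, true_and, mem_image]
  constructor
  · intro hj
    refine ⟨fun l => j l - i, ?_, by funext l; simp⟩
    intro h; apply hj; funext l
    have := congrFun h l
    simp only [diag] at this ⊢
    rw [sub_eq_zero] at this
    exact this
  · rintro ⟨k, hk, rfl⟩
    intro h; apply hk; funext l
    have := congrFun h l
    simp only [diag] at this ⊢
    have : k l = 0 := by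
      have h2 : k l + i = 0 + i := by rw [zero_add]; exact this
      exact add_right_cancel h2
    exact this

lemma entry_phi (A : Tensor n m) (hC : IsCirculant A) (i : Fin n) (j : Fin (m-1) → Fin n) :
    A i (fun l => j l + i) = A 0 j := by
  rw [row_eq A hC]
  simp

lemma gamma_eq (A : Tensor n m) (hC : IsCirculant A) (i : Fin n) :
    gammaPlus A i = gammaPlus A 0 := by
  unfold gammaPlus
  rw [offIdx_eq i, Finset.fold_image (fun a _ b _ h => phi_inj i h)]
  exact Finset.fold_congr (fun j _ => entry_phi A hC i j)

lemma defSum_eq (A : Tensor n m) (hC : IsCirculant A) (i : Fin n) :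
    defSum A i = defSum A 0 := by
  unfold defSum
  rw [offIdx_eq i, Finset.sum_image (fun a _ b _ h => phi_inj i h)]
  exact Finset.sum_congr rfl (fun j _ => by rw [gamma_eq A hC, entry_phi A hC])

lemma diag_eq (A : Tensor n m) (hC : IsCirculant A) (i : Fin n) :
    A i (diag i) = A 0 (diag 0) := by
  rw [row_eq A hC]
  congr 1
  funext l
  simp [diag]

lemma rowSum_eq (A : Tensor n m) (hC : IsCirculant A) (i : Fin n) :
    rowSum A i = rowSum A 0 := by
  unfold rowSum
  refine Fintype.sum_equiv (Equiv.piCongrRight fun _ => Equiv.subRight i) _ _ ?_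
  intro j
  exact row_eq A hC i j

lemma gamma_nonneg (A : Tensor n m) (i : Fin n) : 0 ≤ gammaPlus A i :=
  (Finset.le_fold_max 0).mpr (Or.inl le_rfl)

lemma entry_le_gamma (A : Tensor n m) (i : Fin n) {j} (hj : j ∈ offIdx n m i) :
    A i j ≤ gammaPlus A i :=
  (Finset.le_fold_max _).mpr (Or.inr ⟨j, hj, le_rfl⟩)

lemma defSum_nonneg (A : Tensor n m) (i : Fin n) : 0 ≤ defSum A i :=
  Finset.sum_nonneg fun j hj => sub_nonneg.mpr (entry_le_gamma A i hj)

lemma card_univ_fn : (Finset.univ : Finset (Fin (m-1) → Fin n)).card = n ^ (m-1) := by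
  simp [Fintype.card_fun]

lemma univ_eq_insert (i : Fin n) :
    (Finset.univ : Finset (Fin (m-1) → Fin n)) = insert (diag i) (offIdx n m i) := by
  ext j
  simp only [mem_univ, mem_insert, offIdx, mem_filter, true_and, true_iff]
  by_cases h : j = diag i
  · exact Or.inl h
  · exact Or.inr h

lemma diag_not_mem (i : Fin n) : diag i ∉ offIdx n m i := by
  simp [offIdx]

lemma card_offIdx (i : Fin n) : (offIdx n m i).card = n ^ (m-1) - 1 := by
  have h := univ_eq_insert (n := n) (m := m) i
  have : (n : ℕ) ^ (m-1) = (offIdx n m i).card + 1 := by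
    rw [← card_univ_fn, h, Finset.card_insert_of_notMem (diag_not_mem i)]
  omega

lemma rowSum_split (A : Tensor n m) (i : Fin n) :
    rowSum A i = A i (diag i) + ∑ j ∈ offIdx n m i, A i j := by
  unfold rowSum
  rw [univ_eq_insert i, Finset.sum_insert (diag_not_mem i)]

lemma defSum_formula (A : Tensor n m) (i : Fin n) :
    defSum A i = ((n:ℝ) ^ (m-1) - 1) * gammaPlus A i - ∑ j ∈ offIdx n m i, A i j := by
  unfold defSum
  rw [Finset.sum_sub_distrib, Finset.sum_const, nsmul_eq_mul, card_offIdx]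
  have h1 : (1:ℕ) ≤ n ^ (m-1) := Nat.one_le_pow _ _ (Nat.pos_of_ne_zero (NeZero.ne n))
  push_cast [h1]
  ring

lemma nPow_pos : (0:ℝ) < (n:ℝ) ^ (m-1) := by
  have h : 0 < n := Nat.pos_of_ne_zero (NeZero.ne n)
  positivity

/-- Condition (c) is equivalent to `rowSum > n^(m-1) * gamma`. -/
lemma cond_c_iff (A : Tensor n m) :
    (defSum A 0 < A 0 (diag 0) - gammaPlus A 0) ↔
      (n:ℝ) ^ (m-1) * gammaPlus A 0 < rowSum A 0 := by
  rw [defSum_formula, rowSum_split]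
  constructor <;> intro h <;> nlinarith

lemma b_iff_c (A : Tensor n m) (hC : IsCirculant A) :
    IsBTensor A ↔ defSum A 0 < A 0 (diag 0) - gammaPlus A 0 := by
  rw [cond_c_iff]
  have hN := nPow_pos (n := n) (m := m)
  constructor
  · intro hB
    obtain ⟨hS, hoff⟩ := hB 0
    have hg : gammaPlus A 0 < (1 / (n:ℝ) ^ (m-1)) * rowSum A 0 := by
      rw [gammaPlus, Finset.fold_max_lt]
      refine ⟨by positivity, fun j hj => hoff j ?_⟩
      simpa [offIdx] using hj
    calc (n:ℝ) ^ (m-1) * gammaPlus A 0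
        < (n:ℝ) ^ (m-1) * ((1 / (n:ℝ) ^ (m-1)) * rowSum A 0) := by
          exact (mul_lt_mul_iff_right₀ hN).mpr hg
      _ = rowSum A 0 := by field_simp
  · intro h
    have hg0 := gamma_nonneg A (0 : Fin n)
    have hS : 0 < rowSum A 0 := lt_of_le_of_lt (by positivity) h
    intro i
    rw [rowSum_eq A hC]
    refine ⟨hS, fun j hj => ?_⟩
    have hjo : j ∈ offIdx n m i := by simpa [offIdx] using hj
    have h1 : A i j ≤ gammaPlus A 0 := by
      rw [← gamma_eq A hC i]; exact entry_le_gamma A i hjo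
    have h2 : gammaPlus A 0 < (1 / (n:ℝ) ^ (m-1)) * rowSum A 0 := by
      rw [div_mul_eq_mul_div, lt_div_iff₀ hN, one_mul, mul_comm]
      exact h
    exact lt_of_le_of_lt h1 h2

lemma db_iff_c (A : Tensor n m) (hC : IsCirculant A) :
    IsDoubleBTensor A ↔ defSum A 0 < A 0 (diag 0) - gammaPlus A 0 := by
  have hD0 := defSum_nonneg A (0 : Fin n)
  constructor
  · intro hDB
    obtain ⟨h1, h2, h3⟩ := hDB 0
    by_cases hn : ∃ j : Fin n, j ≠ 0
    · obtain ⟨j, hj⟩ := hn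
      have := h3 j hj
      rw [defSum_eq A hC j, gamma_eq A hC j, diag_eq A hC j] at this
      nlinarith
    · -- n = 1 : every index tuple equals diag 0, so defSum = 0
      push_neg at hn
      have hsub : ∀ j : Fin (m-1) → Fin n, j = diag (0 : Fin n) := by
        intro j; funext l; exact hn (j l)
      have : offIdx n m (0 : Fin n) = ∅ := by
        ext j; simp [offIdx, hsub j]
      rw [defSum, this]
      simpa using h1
  · intro hc
    intro i
    rw [defSum_eq A hC i, gamma_eq A hC i, diag_eq A hC i]
    refine ⟨by nlinarith, le_of_lt hc, fun j _ => ?_⟩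
    rw [defSum_eq A hC j, gamma_eq A hC j, diag_eq A hC j]
    nlinarith

end Aux

theorem stmt7 {n m : ℕ} [NeZero n] (A : Tensor n m) (hC : IsCirculant A) :
    (IsBTensor A ↔ IsDoubleBTensor A) ∧
    (IsDoubleBTensor A ↔
      defSum A 0 < A 0 (diag 0) - gammaPlus A 0) := by
  have h1 := b_iff_c A hC
  have h2 := db_iff_c A hC
  exact ⟨h1.trans h2.symm, h2⟩

end TensorB
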